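/- Let A ∈ I and let 𝔞 be an ideal of 𝒪 with δ₁(A) | 𝔞 | δ₂(A), let a ∈ 𝔞 be nonzero with a𝒪 + δ₂(A) = 𝔞, and set 𝔮 = 𝔞⁻¹·a𝒪 and 𝔟 = 𝔞⁻¹·δ₂(A). Then for every ideal 𝔠 of 𝒪 and every c ∈ 𝔮, the following are equivalent: (i) 𝔠 divides 𝔞 + (c−1)𝒪 + c·𝔮⁻¹𝔟; (ii) 𝔠 divides 𝔞, 𝔞𝔠 divides δ₂(A), and c − 1 ∈ 𝔠. -/

import Mathlib

open Matrix

/-- The first determinantal divisor `δ₁(A)`. -/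
def delta1 {O : Type*} [CommRing O] (A : Matrix (Fin 2) (Fin 2) O) : Ideal O :=
  Ideal.span {A 0 0, A 0 1, A 1 0, A 1 1}

/-- The second determinantal divisor `δ₂(A) = (det A)𝒪`. -/
def delta2 {O : Type*} [CommRing O] (A : Matrix (Fin 2) (Fin 2) O) : Ideal O :=
  Ideal.span {A.det}

theorem stmt6 {O : Type*} [CommRing O] [IsDomain O] [IsDedekindDomain O]
    -- `𝒪` is norm-finite:
    (hnf : ∀ x : O, x ≠ 0 → Finite (O ⧸ Ideal.span {x}))
    (A : Matrix (Fin 2) (Fin 2) O) (hA : A.det ≠ 0)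
    -- `δ₁(A) | 𝔞 | δ₂(A)` (divisibility of ideals is reverse inclusion):
    (𝔞 : Ideal O) (h1 : 𝔞 ≤ delta1 A) (h2 : delta2 A ≤ 𝔞)
    -- a nonzero `a ∈ 𝔞` with `a𝒪 + δ₂(A) = 𝔞`:
    (a : O) (ha : a ≠ 0) (haa : a ∈ 𝔞) (hagen : Ideal.span {a} + delta2 A = 𝔞)
    -- `𝔮 = 𝔞⁻¹·a𝒪` and `𝔟 = 𝔞⁻¹·δ₂(A)`, characterised by `𝔮𝔞 = a𝒪` and `𝔟𝔞 = δ₂(A)`: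
    (𝔮 𝔟 : Ideal O) (h𝔮 : 𝔮 * 𝔞 = Ideal.span {a}) (h𝔟 : 𝔟 * 𝔞 = delta2 A)
    (𝔠 : Ideal O) (c : O) (hc : c ∈ 𝔮) :
    -- (i) `𝔠 | 𝔞 + (c-1)𝒪 + c𝔮⁻¹𝔟`, where the ideal `𝔡 = c𝔮⁻¹𝔟` is characterised by
    -- `𝔡𝔮 = c𝒪·𝔟`:
    (∃ 𝔡 : Ideal O, 𝔡 * 𝔮 = Ideal.span {c} * 𝔟 ∧ 𝔞 + Ideal.span {c - 1} + 𝔡 ≤ 𝔠) ↔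
      -- (ii) `𝔠 | 𝔞`, `𝔞𝔠 | δ₂(A)` and `𝔠 | c - 1`:
      (𝔞 ≤ 𝔠 ∧ delta2 A ≤ 𝔞 * 𝔠 ∧ c - 1 ∈ 𝔠) := by
  have h𝔞0 : 𝔞 ≠ 0 := fun h => ha (by simpa [h, Ideal.mem_bot] using haa)
  have h𝔮0 : 𝔮 ≠ 0 := by
    intro h
    apply ha
    have : Ideal.span {a} = 0 := by rw [← h𝔮, h, zero_mul]
    simpa using (Ideal.span_singleton_eq_bot).1 this
  have hqc : 𝔮 ∣ Ideal.span {c} := Ideal.dvd_iff_le.2 ((Ideal.span_singleton_le_iff_mem _).2 hc)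
  constructor
  · rintro ⟨𝔡, hd1, hd2⟩
    have h𝔞c : 𝔞 ≤ 𝔠 := le_trans (le_trans le_sup_left le_sup_left) hd2
    have hc1 : c - 1 ∈ 𝔠 :=
      hd2 (Ideal.mem_sup_left (Ideal.mem_sup_right (Ideal.mem_span_singleton_self _)))
    refine ⟨h𝔞c, ?_, hc1⟩
    have hbc : 𝔟 ≤ 𝔠 := by
      intro x hx
      have hcx : c * x ∈ 𝔠 := by
        apply hd2
        apply Ideal.mem_sup_right
        have : c * x ∈ 𝔡 * 𝔮 := by
          rw [hd1]
          exact Ideal.mul_mem_mul (Ideal.mem_span_singleton_self c) hx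
        exact Ideal.mul_le_left this
      have hcx1 : (c - 1) * x ∈ 𝔠 := Ideal.mul_mem_right x 𝔠 hc1
      have hx' : x = c * x - (c - 1) * x := by ring
      rw [hx']
      exact 𝔠.sub_mem hcx hcx1
    rw [← h𝔟, mul_comm 𝔞 𝔠]
    exact Ideal.mul_mono hbc le_rfl
  · rintro ⟨hac, hd2, hc1⟩
    have hqd : 𝔮 ∣ Ideal.span {c} * 𝔟 := dvd_trans hqc (Dvd.intro 𝔟 rfl)
    obtain ⟨𝔡, hd⟩ := hqd
    refine ⟨𝔡, by rw [hd, mul_comm], ?_⟩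
    have hbc : 𝔠 ∣ 𝔟 := by
      rw [← h𝔟] at hd2
      have h' : 𝔞 * 𝔠 ∣ 𝔟 * 𝔞 := Ideal.dvd_iff_le.2 hd2
      rw [mul_comm 𝔞 𝔠] at h'
      exact (mul_dvd_mul_iff_right h𝔞0).1 h'
    have hcd : 𝔠 ∣ 𝔡 := by
      have h' : 𝔠 * 𝔮 ∣ 𝔡 * 𝔮 := by
        rw [mul_comm 𝔡 𝔮, ← hd, mul_comm (Ideal.span {c}) 𝔟]
        exact mul_dvd_mul hbc hqc
      exact (mul_dvd_mul_iff_right h𝔮0).1 h'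
    refine sup_le (sup_le hac ?_) (Ideal.le_of_dvd hcd)
    exact (Ideal.span_singleton_le_iff_mem _).2 hc1
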